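/- Key scalar inequality from Lemma 3's proof: Let θ, γ ∈ (0, π) with sin θ, sin γ ≠ 0. Set a = 2cos²θ cos²γ, b = 2 sinθ cosθ sinγ cosγ, c = 1 + cos²γ/sin²γ + cos²θ/sin²θ, d = sin²θ sin²γ. Then for all x ∈ [0, 1/√c], a x² + b x √(1 − c x²) + d ≤ 1, with equality for some x > 0 only if cos θ = cos γ = 0. -/

import Mathlib

open Matrix BigOperators
open scoped Kronecker ComplexOrder

noncomputable section

/-- A positive operator on a bipartite space is separable if it is a finite sum of
tensor (Kronecker) products of positive semidefinite local operators. -/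
def IsSepOp {m n : Type*} [Fintype m] [Fintype n]
    (σ : Matrix (m × n) (m × n) ℂ) : Prop :=
  ∃ (k : ℕ) (f : Fin k → Matrix m m ℂ) (g : Fin k → Matrix n n ℂ),
    (∀ i, (f i).PosSemidef) ∧ (∀ i, (g i).PosSemidef) ∧ σ = ∑ i, f i ⊗ₖ g i

variable {A0 A B B0 : Type*} [Fintype A0] [Fintype A] [Fintype B] [Fintype B0]
  [DecidableEq A0] [DecidableEq A] [DecidableEq B] [DecidableEq B0]

/-- `I^{A0} ⊗ ρ^{AB} ⊗ I^{B0}` as an operator on `H_{A0} ⊗ H_A ⊗ H_B ⊗ H_{B0}`. -/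
def midEmbed (ρ : Matrix (A × B) (A × B) ℂ) :
    Matrix ((A0 × A) × (B × B0)) ((A0 × A) × (B × B0)) ℂ :=
  Matrix.of fun p q =>
    (if p.1.1 = q.1.1 then 1 else 0) * ρ (p.1.2, p.2.1) (q.1.2, q.2.1) *
      (if p.2.2 = q.2.2 then 1 else 0)

/-- Partial trace over the middle factors `H_A ⊗ H_B`. -/
def ptraceMid (M : Matrix ((A0 × A) × (B × B0)) ((A0 × A) × (B × B0)) ℂ) :
    Matrix (A0 × B0) (A0 × B0) ℂ :=
  Matrix.of fun p q => ∑ a : A, ∑ b : B, M ((p.1, a), (b, p.2)) ((q.1, a), (b, q.2))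

/-- Effective operator `Tr_{AB}[(I ⊗ ρ^{AB} ⊗ I)(M^{A0A} ⊗ M^{BB0})]`. -/
def effOp (ρ : Matrix (A × B) (A × B) ℂ)
    (M1 : Matrix (A0 × A) (A0 × A) ℂ) (M2 : Matrix (B × B0) (B × B0) ℂ) :
    Matrix (A0 × B0) (A0 × B0) ℂ :=
  ptraceMid (midEmbed ρ * (M1 ⊗ₖ M2))

/-- Tensor product of vectors. -/
def tens {m n : Type*} (u : m → ℂ) (v : n → ℂ) : m × n → ℂ := fun p => u p.1 * v p.2

/-- Rank-one projector `|v⟩⟨v|` associated to a vector. -/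
def vecProj {m : Type*} (v : m → ℂ) : Matrix m m ℂ := Matrix.of fun p q => v p * star (v q)


lemma lemF (s t u v : ℝ) (ht : 0 ≤ t) (hv : 0 ≤ v)
    (hst : s^2 + t^2 = 1) (huv : u^2 + v^2 = 1) :
    t*v*(s^2*u^2) ≤ s^2*t^2 + s^4*v^2 + t^4*u^2 := by
  have hu1 : u^2 ≤ 1 := by nlinarith [sq_nonneg v]
  have hA : 0 ≤ (t-v)^2*(s^2*u^2) := by positivity
  have h2 : t^2*(s^2*u^2) ≤ 2*(s^2*t^2) := by
    nlinarith [mul_nonneg (mul_nonneg (sq_nonneg t) (sq_nonneg s)) (sub_nonneg.2 hu1)]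
  rcases le_or_gt (u^2) (2*s^2) with hcase|hcase
  · have h3 : v^2*(s^2*u^2) ≤ 2*(s^4*v^2) := by
      nlinarith [mul_nonneg (mul_nonneg (sq_nonneg s) (sq_nonneg v)) (sub_nonneg.2 hcase)]
    nlinarith [hA, h2, h3, sq_nonneg (t^2*u)]
  · have hs2 : s^2 ≤ 1/2 := by nlinarith [sq_nonneg u]
    have hv1 : v^2 ≤ 1 := by nlinarith [sq_nonneg u]
    have h3' : s^2*v^2 ≤ 2*(t^2)^2 := by nlinarith [sq_nonneg s, sq_nonneg v]
    have h3 : v^2*(s^2*u^2) ≤ 2*(t^4*u^2) := by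
      nlinarith [mul_le_mul_of_nonneg_right h3' (sq_nonneg u)]
    nlinarith [hA, h2, h3, sq_nonneg (s^2*v)]

lemma lemG (s t u v : ℝ) (hs : 0 < s) (hu : 0 < u) (ht : 0 ≤ t) (hv : 0 ≤ v)
    (hst : s^2 + t^2 = 1) (huv : u^2 + v^2 = 1) (hne : t ≠ 0 ∨ v ≠ 0) :
    0 < (t^2+s^2*v^2)*(s^2*t^2+s^4*v^2+(t^2)^2*u^2) - t^2*v^2*(s^2*u^2) := by
  have hF := lemF s t u v ht hv hst huv
  have hD : 0 < s^2*u^2 := by positivity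
  rcases eq_or_lt_of_le (mul_nonneg ht hv) with htv|htv
  · -- t*v = 0
    rcases mul_eq_zero.1 htv.symm with h0|h0
    · have hv0 : v ≠ 0 := by
        rcases hne with h|h
        · exact absurd h0 h
        · exact h
      subst h0
      have key : 0 < (s^2)^3 * (v^2)^2 := by positivity
      nlinarith [key]
    · have ht0 : t ≠ 0 := by
        rcases hne with h|h
        · exact h
        · exact absurd h0 h
      subst h0
      have key : 0 < s^2*(t^2)^2 := by positivity
      have key2 : 0 ≤ (t^2)^3*u^2 := by positivity
      nlinarith [key, key2]
  · -- 0 < t*v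
    have ht1 : t < 1 := by nlinarith [sq_nonneg s, hs]
    have hv1 : v ≤ 1 := by nlinarith [sq_nonneg u]
    have htv1 : t*v < 1 := by nlinarith
    have hmd : t*v < t^2 + s^2*v^2 := by nlinarith [sq_nonneg (t-v), mul_pos htv (sub_pos.2 htv1)]
    have hmdpos : 0 < t^2 + s^2*v^2 := lt_trans htv hmd
    nlinarith [mul_le_mul_of_nonneg_left hF (le_of_lt hmdpos),
      mul_pos (mul_pos htv hD) (sub_pos.2 hmd)]

lemma keyMain (s t u v x y : ℝ) (hs : 0 < s) (hu : 0 < u)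
    (hst : s^2 + t^2 = 1) (huv : u^2 + v^2 = 1) (hx : 0 ≤ x) (hy : 0 ≤ y)
    (hcon : s^2*u^2*y^2 + (s^2 + t^2*u^2)*x^2 = s^2*u^2) :
    2*t^2*v^2*x^2 + 2*s*t*u*v*x*y + s^2*u^2 ≤ 1 ∧
    (0 < x → 2*t^2*v^2*x^2 + 2*s*t*u*v*x*y + s^2*u^2 = 1 → t = 0 ∧ v = 0) := by
  by_cases hm : t = 0 ∧ v = 0
  · obtain ⟨ht0, hv0⟩ := hm
    subst ht0; subst hv0
    constructor
    · nlinarith []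
    · intro _ _; exact ⟨rfl, rfl⟩
  · have hne : t ≠ 0 ∨ v ≠ 0 := by
      by_contra h
      push_neg at h
      exact hm ⟨h.1, h.2⟩
  -- G > 0
    have hne' : |t| ≠ 0 ∨ |v| ≠ 0 := by
      rcases hne with h|h
      · exact Or.inl (abs_ne_zero.2 h)
      · exact Or.inr (abs_ne_zero.2 h)
    have hG0 := lemG s |t| u |v| hs hu (abs_nonneg t) (abs_nonneg v)
      (by rw [sq_abs]; exact hst) (by rw [sq_abs]; exact huv) hne'
    simp only [sq_abs] at hG0
    have hid : (1 - (2*t^2*v^2*x^2 + 2*s*t*u*v*x*y + s^2*u^2)) *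
        ((s^2*u^2) * ((t^2+s^2*v^2)*(s^2*u^2))) =
        ((t^2+s^2*v^2)*(s^2*u^2)*y - s*t*u*v*(s^2*u^2)*x)^2 +
        (s^2*u^2)*((t^2+s^2*v^2)*(s^2*t^2+s^4*v^2+(t^2)^2*u^2) - t^2*v^2*(s^2*u^2))*x^2 := by
      linear_combination (-((t^2+s^2*v^2)^2*(s^2*u^2)))*hcon +
        (1*u^4*v^2 + (-1)*u^4*v^4 + (-1)*u^6*v^2 + 1*t^2*u^4 + (-4)*t^2*u^4*v^2 + 1*t^2*u^4*v^2*x^2 + 3*t^2*u^4*v^4 + (-1)*t^2*u^4*v^4*x^2 + (-1)*t^2*u^6 + 3*t^2*u^6*v^2 + (-1)*t^2*u^6*v^2*x^2 + (-2)*t^4*u^4 + 5*t^4*u^4*v^2 + (-2)*t^4*u^4*v^2*x^2 + (-3)*t^4*u^4*v^4 + 2*t^4*u^4*v^4*x^2 + 2*t^4*u^6 + (-3)*t^4*u^6*v^2 + 2*t^4*u^6*v^2*x^2 + 1*t^6*u^4 + (-2)*t^6*u^4*v^2 + 1*t^6*u^4*v^2*x^2 + 1*t^6*u^4*v^4 +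 (-1)*t^6*u^4*v^4*x^2 + (-1)*t^6*u^6 + 1*t^6*u^6*v^2 + (-1)*t^6*u^6*v^2*x^2 + 1*s^2*u^4*v^2 + (-1)*s^2*u^4*v^4 + (-1)*s^2*u^6*v^2 + 1*s^2*t^2*u^4 + (-3)*s^2*t^2*u^4*v^2 + 1*s^2*t^2*u^4*v^2*x^2 + 2*s^2*t^2*u^4*v^4 + (-1)*s^2*t^2*u^4*v^4*x^2 + (-1)*s^2*t^2*u^6 + 2*s^2*t^2*u^6*v^2 + (-1)*s^2*t^2*u^6*v^2*x^2 + (-1)*s^2*t^4*u^4 + 2*s^2*t^4*u^4*v^2 + (-1)*s^2*t^4*u^4*v^2*x^2 + (-1)*s^2*t^4*u^4*v^4 + 1*s^2*t^4*u^4*v^4*x^2 + 1*s^2*t^4*u^6 + (-1)*s^2*t^4*u^6*v^2 + 1*s^2*t^4*u^6*v^2*x^2 + 1*s^4*u^4*v^2 + (-1)*s^4*u^4*v^4 + (-1)*s^4*u^6*v^2 + (-2)*s^4*t^2*u^4*v^2 + 1*s^4*t^2*u^4*v^4 + (-1)*s^4*t^2*u^4*v^4*x^2 + (-1)*s^4*t^2*u^6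 + 1*s^4*t^2*u^6*v^2 + (-1)*s^4*t^2*u^6*v^2*x^2 + (-1)*s^6*u^4*v^4 + (-1)*s^6*u^6*v^2)*hst + ((-1)*u^4*v^2 + (-1)*t^2*u^4 + 4*t^2*u^4*v^2 + (-1)*t^2*u^4*v^2*x^2 + 3*t^4*u^4 + (-6)*t^4*u^4*v^2 + 3*t^4*u^4*v^2*x^2 + (-3)*t^6*u^4 + 4*t^6*u^4*v^2 + (-3)*t^6*u^4*v^2*x^2 + 1*t^8*u^4 + (-1)*t^8*u^4*v^2 + 1*t^8*u^4*v^2*x^2)*huv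
    have hmdpos : 0 < t^2 + s^2*v^2 := by
      rcases hne with h|h
      · have : 0 < t^2 := by positivity
        nlinarith [sq_nonneg (s*v)]
      · have : 0 < v^2 := by positivity
        nlinarith [sq_nonneg t, mul_pos (mul_pos hs hs) this]
    have hDB : 0 < (s^2*u^2) * ((t^2+s^2*v^2)*(s^2*u^2)) := by positivity
    constructor
    · nlinarith [hid, hDB, sq_nonneg ((t^2+s^2*v^2)*(s^2*u^2)*y - s*t*u*v*(s^2*u^2)*x),
        mul_nonneg (mul_nonneg (le_of_lt (by positivity : (0:ℝ) < s^2*u^2)) (le_of_lt hG0)) (sq_nonneg x)]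
    · intro hxpos heq
      exfalso
      nlinarith [hid, heq, sq_nonneg ((t^2+s^2*v^2)*(s^2*u^2)*y - s*t*u*v*(s^2*u^2)*x),
        mul_pos (mul_pos (by positivity : (0:ℝ) < s^2*u^2) hG0) (pow_pos hxpos 2)]

/-- the key scalar inequality in the proof of Lemma 3. -/
theorem stmt9 (θ γ : ℝ) (hθ : θ ∈ Set.Ioo 0 Real.pi) (hγ : γ ∈ Set.Ioo 0 Real.pi)
    (hsθ : Real.sin θ ≠ 0) (hsγ : Real.sin γ ≠ 0)
    (a b c d : ℝ)
    (ha : a = 2 * Real.cos θ ^ 2 * Real.cos γ ^ 2)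
    (hb : b = 2 * Real.sin θ * Real.cos θ * Real.sin γ * Real.cos γ)
    (hc : c = 1 + Real.cos γ ^ 2 / Real.sin γ ^ 2 + Real.cos θ ^ 2 / Real.sin θ ^ 2)
    (hd : d = Real.sin θ ^ 2 * Real.sin γ ^ 2) :
    (∀ x : ℝ, 0 ≤ x → x ≤ 1 / Real.sqrt c →
      a * x ^ 2 + b * x * Real.sqrt (1 - c * x ^ 2) + d ≤ 1) ∧
    ((∃ x : ℝ, 0 < x ∧ x ≤ 1 / Real.sqrt c ∧
        a * x ^ 2 + b * x * Real.sqrt (1 - c * x ^ 2) + d = 1) →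
      Real.cos θ = 0 ∧ Real.cos γ = 0) := by
  have hs : 0 < Real.sin θ := Real.sin_pos_of_pos_of_lt_pi hθ.1 hθ.2
  have hu : 0 < Real.sin γ := Real.sin_pos_of_pos_of_lt_pi hγ.1 hγ.2
  have hst : Real.sin θ^2 + Real.cos θ^2 = 1 := Real.sin_sq_add_cos_sq θ
  have huv : Real.sin γ^2 + Real.cos γ^2 = 1 := Real.sin_sq_add_cos_sq γ
  have hcN : c * (Real.sin θ^2 * Real.sin γ^2)
      = Real.sin θ^2 + Real.cos θ^2 * Real.sin γ^2 := by
    rw [hc]; field_simp; ring_nf; linear_combination (Real.sin θ ^ 2) * huv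
  have hc1 : 1 ≤ c := by
    rw [hc]
    have h1 : 0 ≤ Real.cos γ ^ 2 / Real.sin γ ^ 2 := by positivity
    have h2 : 0 ≤ Real.cos θ ^ 2 / Real.sin θ ^ 2 := by positivity
    linarith
  have hcpos : (0:ℝ) < c := lt_of_lt_of_le one_pos hc1
  have main : ∀ x : ℝ, 0 ≤ x → x ≤ 1 / Real.sqrt c →
      (a * x ^ 2 + b * x * Real.sqrt (1 - c * x ^ 2) + d ≤ 1 ∧
       (0 < x → a * x ^ 2 + b * x * Real.sqrt (1 - c * x ^ 2) + d = 1 →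
          Real.cos θ = 0 ∧ Real.cos γ = 0)) := by
    intro x hx0 hxle
    have hx2 : c * x^2 ≤ 1 := by
      have h1 : x^2 ≤ (1/Real.sqrt c)^2 := by
        apply pow_le_pow_left₀ hx0 hxle
      have h2 : (1/Real.sqrt c)^2 = 1/c := by
        rw [div_pow, one_pow, Real.sq_sqrt hcpos.le]
      rw [h2] at h1
      calc c * x^2 ≤ c * (1/c) := by
            exact mul_le_mul_of_nonneg_left h1 hcpos.le
        _ = 1 := by field_simp
    set y := Real.sqrt (1 - c*x^2) with hydef
    have hy0 : 0 ≤ y := Real.sqrt_nonneg _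
    have hy2 : y^2 = 1 - c*x^2 := Real.sq_sqrt (by linarith)
    have hcon : Real.sin θ^2*Real.sin γ^2*y^2 +
        (Real.sin θ^2 + Real.cos θ^2*Real.sin γ^2)*x^2 = Real.sin θ^2*Real.sin γ^2 := by
      linear_combination (Real.sin θ^2*Real.sin γ^2) * hy2 - x^2 * hcN
    have hkey := keyMain (Real.sin θ) (Real.cos θ) (Real.sin γ) (Real.cos γ) x y
      hs hu hst huv hx0 hy0 hcon
    constructor
    · rw [ha, hb, hd]
      nlinarith [hkey.1]
    · intro hxpos heq
      rw [ha, hb, hd] at heq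
      exact hkey.2 hxpos (by linear_combination heq)
  constructor
  · intro x hx0 hxle; exact (main x hx0 hxle).1
  · rintro ⟨x, hx0, hxle, heq⟩
    exact (main x hx0.le hxle).2 hx0 heq
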